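/- Let L_n ⊆ S_n be a zigzag language. For every j ∈ {2,…,n}, among the pairs of consecutive permutations in J(L_n) that differ in a jump of the value j, the first such pair (if any exists) differs in a left jump of j. -/

import Mathlib

/-!
Shared definitions: permutations in one-line notation as lists of naturals,
deletion `p`, insertion `c_i`, zigzag languages, the Gray code sequence `J(L_n)`,
jumps, minimal jumps, the auxiliary sequences `s_n^π`, Algorithm M,
vincular pattern containment and 2-clumped permutations.
-/

/-- `S_n`: permutations of `{1,…,n}` in one-line notation, as lists of naturals. -/
def SymmList (n : ℕ) : Set (List ℕ) := {l | List.Perm l (List.range' 1 n)}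

/-- The identity permutation `id_n = 1 2 ⋯ n`. -/
def idPerm (n : ℕ) : List ℕ := List.range' 1 n

/-- `p(π)`: delete the largest entry `n = π.length` from the permutation `π ∈ S_n`. -/
def pdel (l : List ℕ) : List ℕ := l.erase l.length

/-- `c_i(π)`: insert the new largest value `π.length + 1` at (1-indexed) position `i`. -/
def cins (i : ℕ) (l : List ℕ) : List ℕ :=
  l.take (i - 1) ++ (l.length + 1) :: l.drop (i - 1)

/-- Zigzag languages of permutations: `L_0 = {ε}` is a zigzag language, and
`L ⊆ S_{n+1}` is a zigzag language if `p(L)` is a zigzag language and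
`c_1(π), c_{n+1}(π) ∈ L` for every `π ∈ p(L)`. -/
inductive IsZigzag : ℕ → Set (List ℕ) → Prop
  | zero : IsZigzag 0 {[]}
  | succ (n : ℕ) (L : Set (List ℕ)) :
      L ⊆ SymmList (n + 1) →
      IsZigzag n (pdel '' L) →
      (∀ l ∈ pdel '' L, cins 1 l ∈ L ∧ cins (n + 1) l ∈ L) →
      IsZigzag (n + 1) L

/-- `→c(π)`: the sequence of those `c_1(π),…,c_n(π)` lying in `L`,
in increasing order of the insertion position. -/
noncomputable def cSeq (L : Set (List ℕ)) (n : ℕ) (l : List ℕ) : List (List ℕ) :=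
  ((List.range' 1 n).map (fun i => cins i l)).filter
    (fun x => @decide (x ∈ L) (Classical.propDecidable _))

/-- The Gray code sequence `J(L_n)` of a language `L ⊆ S_n`:
`J(L_0) = ε`, and `J(L_{n+1})` is obtained from `J(L_n)` (for the language
`p(L)`) by replacing its entries alternately by `←c(π)` (the reverse of
`→c(π)`) and `→c(π)`. -/
noncomputable def Jseq : ℕ → Set (List ℕ) → List (List ℕ)
  | 0, _ => [[]]
  | (n + 1), L =>
      (((Jseq n (pdel '' L)).mapIdx
        (fun k π => if k % 2 = 0 then (cSeq L (n + 1) π).reverse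
                    else cSeq L (n + 1) π)).flatten)

/-- `ρ` is obtained from `π` by a right jump of the value `v` by `d` steps. -/
def RightJump (π ρ : List ℕ) (v d : ℕ) : Prop :=
  0 < d ∧ ∃ A B C : List ℕ, B.length = d ∧ (∀ x ∈ B, x < v) ∧
    π = A ++ v :: (B ++ C) ∧ ρ = A ++ (B ++ v :: C)

/-- `ρ` is obtained from `π` by a left jump of the value `v` by `d` steps. -/
def LeftJump (π ρ : List ℕ) (v d : ℕ) : Prop := RightJump ρ π v d

/-- A right jump that is minimal with respect to `L`: every right jump of the
same value by fewer steps yields a permutation not in `L`. -/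
def MinimalRightJump (L : Set (List ℕ)) (π ρ : List ℕ) (v d : ℕ) : Prop :=
  RightJump π ρ v d ∧ ∀ d' ρ', d' < d → RightJump π ρ' v d' → ρ' ∉ L

/-- A left jump that is minimal with respect to `L`. -/
def MinimalLeftJump (L : Set (List ℕ)) (π ρ : List ℕ) (v d : ℕ) : Prop :=
  LeftJump π ρ v d ∧ ∀ d' ρ', d' < d → LeftJump π ρ' v d' → ρ' ∉ L

/-- The auxiliary sequence `s_n^π` of a permutation `π` occurring in `J(L_n)`,
as a function of the index `i ∈ {1,…,n}` (value `0` outside this range). -/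
noncomputable def sVec : ℕ → Set (List ℕ) → List ℕ → ℕ → ℕ
  | 0, _, _, _ => 0
  | 1, _, _, i => if i = 1 then 1 else 0
  | (n + 2), L, π, i =>
      let L' := pdel '' L
      let π' := pdel π
      let cbar := if ((Jseq (n + 1) L').idxOf π') % 2 = 0
                  then (cSeq L (n + 2) π').reverse else cSeq L (n + 2) π'
      if cbar.getLast? = some π then
        (if i ≤ n then sVec (n + 1) L' π' i
         else if i = n + 1 then n + 1
         else if i = n + 2 then sVec (n + 1) L' π' (n + 1) else 0)
      else
        (if i ≤ n + 1 then sVec (n + 1) L' π' i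
         else if i = n + 2 then n + 2 else 0)

/-- `j` is at the first position of `l`, or the entry immediately left of `j`
in `l` is larger than `j`. -/
def AtLeftTurn (l : List ℕ) (j : ℕ) : Prop :=
  ∃ A B : List ℕ, l = A ++ j :: B ∧ (A = [] ∨ ∃ x, A.getLast? = some x ∧ j < x)

/-- `j` is at the last position of `l`, or the entry immediately right of `j`
in `l` is larger than `j`. -/
def AtRightTurn (l : List ℕ) (j : ℕ) : Prop :=
  ∃ A B : List ℕ, l = A ++ j :: B ∧ (B = [] ∨ ∃ x, B.head? = some x ∧ j < x)

/-- `j` is not at the first position of `l`, and the entry immediately left of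
`j` in `l` is smaller than `j`. -/
def SmallerLeftNeighbor (l : List ℕ) (j : ℕ) : Prop :=
  ∃ A B : List ℕ, ∃ x, l = A ++ j :: B ∧ A.getLast? = some x ∧ x < j

/-- `j` is not at the last position of `l`, and the entry immediately right of
`j` in `l` is smaller than `j`. -/
def SmallerRightNeighbor (l : List ℕ) (j : ℕ) : Prop :=
  ∃ A B : List ℕ, ∃ x, l = A ++ j :: B ∧ B.head? = some x ∧ x < j

/-- A state of Algorithm M: the current permutation `π` and the auxiliary
arrays `o` and `s`; `o j = false` encodes direction `L` (left) and
`o j = true` encodes `R` (right). -/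
structure MState where
  perm : List ℕ
  o : ℕ → Bool
  s : ℕ → ℕ

/-- The initial state of Algorithm M (step M1): `π = id_n`, `o_j = L`, `s_j = j`. -/
def MInit (n : ℕ) : MState := ⟨idPerm n, fun _ => false, fun j => j⟩

/-- One iteration (steps M3–M5) of Algorithm M on a language `L ⊆ S_n`:
with `j := s_n ≠ 1`, the permutation jumps minimally in the direction `o_j`
(step M4), and the arrays `o`, `s` are updated as in step M5. -/
def MStep (L : Set (List ℕ)) (n : ℕ) (σ σ' : MState) : Prop :=
  σ.s n ≠ 1 ∧
  σ'.perm ∈ L ∧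
  ((σ.o (σ.s n) = false ∧ ∃ d, MinimalLeftJump L σ.perm σ'.perm (σ.s n) d) ∨
   (σ.o (σ.s n) = true ∧ ∃ d, MinimalRightJump L σ.perm σ'.perm (σ.s n) d)) ∧
  (((σ.o (σ.s n) = false ∧ AtLeftTurn σ'.perm (σ.s n)) ∨
    (σ.o (σ.s n) = true ∧ AtRightTurn σ'.perm (σ.s n))) →
      σ'.o = Function.update σ.o (σ.s n) (!σ.o (σ.s n)) ∧
      σ'.s = Function.update (Function.update (Function.update σ.s n n) (σ.s n)
               ((Function.update σ.s n n) (σ.s n - 1))) (σ.s n - 1) (σ.s n - 1)) ∧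
  (¬ ((σ.o (σ.s n) = false ∧ AtLeftTurn σ'.perm (σ.s n)) ∨
      (σ.o (σ.s n) = true ∧ AtRightTurn σ'.perm (σ.s n))) →
      σ'.o = σ.o ∧ σ'.s = Function.update σ.s n n)

/-- `π` contains the vincular pattern `pat` whose marked adjacent pair starts
at (0-indexed) position `k` of `pat`. -/
def ContainsVincular (π pat : List ℕ) (k : ℕ) : Prop :=
  ∃ f : ℕ → ℕ, StrictMonoOn f (Set.Iio pat.length) ∧
    (∀ i < pat.length, f i < π.length) ∧
    f (k + 1) = f k + 1 ∧
    (∀ i < pat.length, ∀ j < pat.length,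
      (pat.getD i 0 < pat.getD j 0 ↔ π.getD (f i) 0 < π.getD (f j) 0))

/-- 2-clumped permutations: those avoiding the vincular patterns
`3(51)24`, `3(51)42`, `24(51)3` and `42(51)3`. -/
def TwoClumped (π : List ℕ) : Prop :=
  ¬ ContainsVincular π [3, 5, 1, 2, 4] 1 ∧ ¬ ContainsVincular π [3, 5, 1, 4, 2] 1 ∧
  ¬ ContainsVincular π [2, 4, 5, 1, 3] 2 ∧ ¬ ContainsVincular π [4, 2, 5, 1, 3] 2

/-- `S'_n`: the set of 2-clumped permutations in `S_n`. -/
def SClump (n : ℕ) : Set (List ℕ) := {l ∈ SymmList n | TwoClumped l}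

/-- `B_n`: the permutations obtained from `1` by repeatedly inserting the new
largest value at the first or the last position. -/
def Bset : ℕ → Set (List ℕ)
  | 0 => {[]}
  | 1 => {[1]}
  | (n + 2) => {l | ∃ π ∈ Bset (n + 1), l = cins 1 π ∨ l = cins (n + 2) π}


/-! ### Auxiliary lemmas -/

section Aux

open List

/-- Position of the first occurrence of `v`. -/
def posOf' (v : ℕ) : List ℕ → ℕ
  | [] => 0
  | a :: l => if a = v then 0 else posOf' v l + 1

theorem posOf'_append_cons {v : ℕ} {A X : List ℕ} (h : v ∉ A) :
    posOf' v (A ++ v :: X) = A.length := by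
  induction A with
  | nil => simp [posOf']
  | cons a A ih =>
    simp only [List.mem_cons, not_or] at h
    simp [posOf', Ne.symm h.1, ih h.2]

theorem symm_spec {m : ℕ} {l : List ℕ} (h : l ∈ SymmList m) :
    l.length = m ∧ l.Nodup ∧ ∀ x ∈ l, 1 ≤ x ∧ x ≤ m := by
  have hp : List.Perm l (List.range' 1 m) := h
  refine ⟨by simpa using hp.length_eq, hp.nodup_iff.mpr (List.nodup_range' ..), ?_⟩
  intro x hx
  have : x ∈ List.range' 1 m := hp.mem_iff.mp hx
  have := List.mem_range'_1.mp this
  omega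

theorem zig_sub {m : ℕ} {L : Set (List ℕ)} (h : IsZigzag m L) : L ⊆ SymmList m := by
  cases h with
  | zero => intro x hx; simp only [Set.mem_singleton_iff] at hx; subst hx
            show List.Perm [] (List.range' 1 0); simp
  | succ n L hsub _ _ => exact hsub

theorem two_le_length {α : Type*} {l : List α} {x y : α} (hx : x ∈ l) (hy : y ∈ l)
    (hxy : x ≠ y) : 2 ≤ l.length := by
  rcases l with _ | ⟨a, _ | ⟨b, l⟩⟩
  · simp at hx
  · simp only [List.mem_singleton] at hx hy
    subst hx; subst hy; exact absurd rfl hxy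
  · simp only [List.length_cons]; omega

theorem decide_true' {p : Prop} {inst : Decidable p} (h : p) : @decide p inst = true :=
  @decide_eq_true p inst h

theorem of_decide_true' {p : Prop} {inst : Decidable p} (h : @decide p inst = true) : p :=
  @of_decide_eq_true p inst h

theorem head?_getElem? {α : Type*} (l : List α) : l.head? = l[0]? := by cases l <;> simp

/-! cins lemmas -/

theorem cins_length (i : ℕ) (l : List ℕ) : (cins i l).length = l.length + 1 := by
  simp [cins]; omega

theorem cins_one (l : List ℕ) : cins 1 l = (l.length + 1) :: l := by simp [cins]

theorem cins_top (l : List ℕ) : cins (l.length + 1) l = l ++ [l.length + 1] := by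
  simp [cins]

theorem posOf'_cins {l : List ℕ} (h : l.length + 1 ∉ l) {i : ℕ} (h1 : 1 ≤ i)
    (h2 : i ≤ l.length + 1) : posOf' (l.length + 1) (cins i l) = i - 1 := by
  have hnt : l.length + 1 ∉ l.take (i-1) := fun hm => h (List.take_subset _ _ hm)
  rw [cins, posOf'_append_cons hnt, List.length_take]; omega

theorem cins_erase {l : List ℕ} (h : l.length + 1 ∉ l) (i : ℕ) :
    (cins i l).erase (l.length + 1) = l := by
  have hnt : l.length + 1 ∉ l.take (i-1) := fun hm => h (List.take_subset _ _ hm)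
  rw [cins, List.erase_append_right _ hnt, List.erase_cons_head, List.take_append_drop]

theorem cins_mem_cSeq {L : Set (List ℕ)} {m : ℕ} {l : List ℕ} {i : ℕ} (h1 : 1 ≤ i)
    (h2 : i ≤ m) (hL : cins i l ∈ L) : cins i l ∈ cSeq L m l := by
  rw [cSeq, List.mem_filter]
  constructor
  · exact List.mem_map.mpr ⟨i, List.mem_range'_1.mpr ⟨h1, by omega⟩, rfl⟩
  · exact decide_true' hL

/-! jump lemmas -/

theorem rightJump_pos {π ρ : List ℕ} {v d : ℕ} (h : RightJump π ρ v d) (hnd : π.Nodup) :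
    posOf' v ρ = posOf' v π + d := by
  obtain ⟨hd, A, B, C, hBlen, hBlt, hπe, hρe⟩ := h
  have hvA : v ∉ A := by
    rw [hπe] at hnd
    exact fun hm => (List.nodup_append'.mp hnd).2.2 hm List.mem_cons_self
  have hvB : v ∉ B := fun hm => lt_irrefl v (hBlt v hm)
  have hvAB : v ∉ A ++ B := by simp [hvA, hvB]
  rw [hπe, posOf'_append_cons hvA, hρe,
    show A ++ (B ++ v :: C) = (A ++ B) ++ v :: C by simp,
    posOf'_append_cons hvAB, List.length_append, hBlen]

theorem RightJump.eraseW {π ρ : List ℕ} {v d w : ℕ} (h : RightJump π ρ v d) (hvw : v < w) :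
    RightJump (π.erase w) (ρ.erase w) v d := by
  obtain ⟨hd, A, B, C, hBlen, hBlt, hπe, hρe⟩ := h
  have hwB : w ∉ B := fun hm => by have := hBlt w hm; omega
  have hwv : w ≠ v := by omega
  by_cases hwA : w ∈ A
  · exact ⟨hd, A.erase w, B, C, hBlen, hBlt,
      by rw [hπe, List.erase_append_left _ hwA],
      by rw [hρe, List.erase_append_left _ hwA]⟩
  · refine ⟨hd, A, B, C.erase w, hBlen, hBlt, ?_, ?_⟩
    · rw [hπe, List.erase_append_right _ hwA, List.erase_cons_tail (by simp; omega),
        List.erase_append_right _ hwB]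
    · rw [hρe, List.erase_append_right _ hwA, List.erase_append_right _ hwB,
        List.erase_cons_tail (by simp; omega)]

theorem RightJump.consW {π ρ : List ℕ} {v d : ℕ} (h : RightJump π ρ v d) (x : ℕ) :
    RightJump (x :: π) (x :: ρ) v d := by
  obtain ⟨hd, A, B, C, hBlen, hBlt, hπe, hρe⟩ := h
  exact ⟨hd, x :: A, B, C, hBlen, hBlt, by rw [hπe]; rfl, by rw [hρe]; rfl⟩

theorem RightJump.concatW {π ρ : List ℕ} {v d : ℕ} (h : RightJump π ρ v d) (x : ℕ) :
    RightJump (π ++ [x]) (ρ ++ [x]) v d := by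
  obtain ⟨hd, A, B, C, hBlen, hBlt, hπe, hρe⟩ := h
  exact ⟨hd, A, B, C ++ [x], hBlen, hBlt, by rw [hπe]; simp, by rw [hρe]; simp⟩

theorem RightJump.of_cons {π ρ : List ℕ} {v d w : ℕ} (h : RightJump (w :: π) (w :: ρ) v d)
    (hvw : v < w) : RightJump π ρ v d := by
  have h2 := h.eraseW hvw
  simpa [List.erase_cons_head] using h2

theorem RightJump.of_concat {π ρ : List ℕ} {v d w : ℕ}
    (h : RightJump (π ++ [w]) (ρ ++ [w]) v d) (hvw : v < w) (h1 : w ∉ π) (h2 : w ∉ ρ) :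
    RightJump π ρ v d := by
  have h3 := h.eraseW hvw
  rw [List.erase_append_right _ h1, List.erase_append_right _ h2] at h3
  simpa using h3

theorem no_selfjump {π : List ℕ} {v d : ℕ} (h : RightJump π π v d) (hnd : π.Nodup) :
    False := by
  have := rightJump_pos h hnd
  have hd := h.1
  omega

theorem no_jump_cins {l : List ℕ} (hm : l.length + 1 ∉ l) (hnd : l.Nodup) {a b j d : ℕ}
    (hj : j < l.length + 1) (h : RightJump (cins a l) (cins b l) j d) : False := by
  have h2 := h.eraseW hj
  rw [cins_erase hm, cins_erase hm] at h2
  exact no_selfjump h2 hnd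

theorem jump_cins {l : List ℕ} {a b : ℕ} (ha : 1 ≤ a) (hab : a < b) (hb : b ≤ l.length + 1)
    (hall : ∀ x ∈ l, x < l.length + 1) :
    RightJump (cins a l) (cins b l) (l.length + 1) (b - a) := by
  have key : (l.take (b-1)).drop (a-1) ++ l.drop (b-1) = l.drop (a-1) := by
    rw [List.drop_take,
      show l.drop (b-1) = (l.drop (a-1)).drop (b-1-(a-1)) by
        rw [List.drop_drop]; congr 1; omega]
    exact List.take_append_drop _ _
  have key2 : l.take (a-1) ++ (l.take (b-1)).drop (a-1) = l.take (b-1) := by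
    rw [show l.take (a-1) = (l.take (b-1)).take (a-1) by
        rw [List.take_take]; congr 1; omega]
    exact List.take_append_drop _ _
  refine ⟨by omega, l.take (a-1), (l.take (b-1)).drop (a-1), l.drop (b-1), ?_, ?_, ?_, ?_⟩
  · rw [List.length_drop, List.length_take]; omega
  · intro x hx; exact hall x (List.take_subset _ _ (List.drop_subset _ _ hx))
  · rw [cins, key]
  · rw [cins, ← List.append_assoc, key2]

/-! filter lemmas -/

theorem head?_filter' {α : Type*} {p : α → Bool} {l : List α} {x : α} (hx : l.head? = some x)
    (hp : p x = true) : (l.filter p).head? = some x := by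
  cases l with
  | nil => simp at hx
  | cons a l =>
    obtain rfl : a = x := by simpa using hx
    simp [List.filter_cons, hp]

theorem getLast?_filter' {α : Type*} {p : α → Bool} {l : List α} {x : α}
    (hx : l.getLast? = some x) (hp : p x = true) : (l.filter p).getLast? = some x := by
  rw [← List.head?_reverse] at hx
  rw [← List.head?_reverse, ← List.filter_reverse]
  exact head?_filter' hx hp

/-! cSeq lemmas -/

theorem cSeq_head {L : Set (List ℕ)} {m : ℕ} {l : List ℕ} (hm : 1 ≤ m)
    (h1 : cins 1 l ∈ L) : (cSeq L m l).head? = some (cins 1 l) := by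
  obtain ⟨m', rfl⟩ : ∃ m', m = m' + 1 := ⟨m - 1, by omega⟩
  rw [cSeq, List.range'_succ, List.map_cons]
  exact head?_filter' rfl (decide_true' h1)

theorem cSeq_last {L : Set (List ℕ)} {m : ℕ} {l : List ℕ} (hm : 1 ≤ m)
    (h1 : cins m l ∈ L) : (cSeq L m l).getLast? = some (cins m l) := by
  obtain ⟨m', rfl⟩ : ∃ m', m = m' + 1 := ⟨m - 1, by omega⟩
  have hr : List.range' 1 (m' + 1) = List.range' 1 m' ++ [m' + 1] := by
    rw [List.range'_concat, Nat.one_mul, Nat.add_comm]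
  rw [cSeq, hr, List.map_append, List.map_singleton]
  exact getLast?_filter' List.getLast?_concat (decide_true' h1)

theorem cSeq_mem {L : Set (List ℕ)} {m : ℕ} {l x : List ℕ} (hx : x ∈ cSeq L m l) :
    x ∈ L ∧ ∃ i, 1 ≤ i ∧ i ≤ m ∧ x = cins i l := by
  rw [cSeq, List.mem_filter] at hx
  obtain ⟨hx1, hx2⟩ := hx
  refine ⟨of_decide_true' hx2, ?_⟩
  obtain ⟨i, hi, rfl⟩ := List.mem_map.mp hx1
  have := List.mem_range'_1.mp hi
  exact ⟨i, by omega, by omega, rfl⟩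

theorem cSeq_pairwise {L : Set (List ℕ)} {m : ℕ} {l : List ℕ} (hm : m = l.length + 1)
    (hnm : l.length + 1 ∉ l) :
    (cSeq L m l).Pairwise (fun x y => posOf' (l.length + 1) x < posOf' (l.length + 1) y) := by
  refine List.Pairwise.sublist List.filter_sublist ?_
  rw [List.pairwise_map]
  have hpw : (List.range' 1 m).Pairwise (· < ·) := List.pairwise_lt_range' ..
  refine hpw.imp_of_mem ?_
  intro a b ha hb hab
  have ha' := List.mem_range'_1.mp ha
  have hb' := List.mem_range'_1.mp hb
  rw [posOf'_cins hnm (by omega) (by omega), posOf'_cins hnm (by omega) (by omega)]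
  omega

/-! flatten indexing -/

theorem lenP_zero' : True := trivial

def lenP {α : Type*} : List (List α) → ℕ → ℕ
  | _, 0 => 0
  | [], _ + 1 => 0
  | b :: bs, t + 1 => b.length + lenP bs t

theorem lenP_zero {α : Type*} (bs : List (List α)) : lenP bs 0 = 0 := by
  cases bs <;> rfl

theorem lenP_cons_succ {α : Type*} (b0 : List α) (bs : List (List α)) (t : ℕ) :
    lenP (b0 :: bs) (t + 1) = b0.length + lenP bs t := rfl

theorem lenP_succ {α : Type*} {bs : List (List α)} {t : ℕ} {b : List α}
    (h : bs[t]? = some b) : lenP bs (t + 1) = lenP bs t + b.length := by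
  induction bs generalizing t with
  | nil => simp at h
  | cons b0 bs ih =>
    cases t with
    | zero => simp only [List.getElem?_cons_zero, Option.some.injEq] at h; subst h
              simp [lenP]
    | succ t =>
      simp only [List.getElem?_cons_succ] at h
      simp only [lenP, ih h]
      omega

theorem lenP_le_succ {α : Type*} (bs : List (List α)) (t : ℕ) :
    lenP bs t ≤ lenP bs (t + 1) := by
  induction bs generalizing t with
  | nil => cases t <;> simp [lenP]
  | cons b0 bs ih =>
    cases t with
    | zero => simp [lenP]
    | succ t => simp only [lenP]; exact Nat.add_le_add_left (ih t) _

theorem lenP_mono {α : Type*} (bs : List (List α)) : Monotone (lenP bs) :=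
  monotone_nat_of_le_succ (lenP_le_succ bs)

theorem flatten_getElem? {α : Type*} {bs : List (List α)} {t : ℕ} {b : List α} {i : ℕ}
    (h : bs[t]? = some b) (hi : i < b.length) :
    bs.flatten[lenP bs t + i]? = some b[i] := by
  induction bs generalizing t with
  | nil => simp at h
  | cons b0 bs ih =>
    cases t with
    | zero =>
      simp only [List.getElem?_cons_zero, Option.some.injEq] at h; subst h
      rw [List.flatten_cons, lenP_zero, Nat.zero_add, List.getElem?_append, if_pos hi]
      exact List.getElem?_eq_getElem hi
    | succ t =>
      simp only [List.getElem?_cons_succ] at h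
      rw [List.flatten_cons, lenP_cons_succ,
        List.getElem?_append, if_neg (by omega),
        show b0.length + lenP bs t + i - b0.length = lenP bs t + i by omega]
      exact ih h

theorem mem_of_getElem?' {α : Type*} {l : List α} {i : ℕ} {a : α} (h : l[i]? = some a) :
    a ∈ l := by
  obtain ⟨hlt, rfl⟩ := List.getElem?_eq_some_iff.mp h
  exact List.getElem_mem _

theorem pair_char {α : Type*} {bs : List (List α)} (hne : ∀ b ∈ bs, b ≠ []) {k : ℕ}
    {x y : α} (hx : bs.flatten[k]? = some x) (hy : bs.flatten[k + 1]? = some y) :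
    (∃ t b i, bs[t]? = some b ∧ b[i]? = some x ∧ b[i + 1]? = some y ∧ k = lenP bs t + i) ∨
    (∃ t b b', bs[t]? = some b ∧ bs[t + 1]? = some b' ∧ b.getLast? = some x ∧
      b'.head? = some y ∧ k + 1 = lenP bs (t + 1)) := by
  induction bs generalizing k with
  | nil => simp at hx
  | cons b0 bs ih =>
    rw [List.flatten_cons] at hx hy
    rcases Nat.lt_trichotomy (k + 1) b0.length with h1 | h1 | h1
    · rw [List.getElem?_append, if_pos (by omega)] at hx
      rw [List.getElem?_append, if_pos h1] at hy
      exact Or.inl ⟨0, b0, k, by simp, hx, hy, by rw [lenP_zero]; omega⟩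
    · rw [List.getElem?_append, if_pos (by omega)] at hx
      rw [List.getElem?_append, if_neg (by omega),
        show k + 1 - b0.length = 0 by omega] at hy
      cases bs with
      | nil => simp at hy
      | cons b1 bs' =>
        rw [List.flatten_cons, List.getElem?_append,
          if_pos (List.length_pos_iff.mpr (hne b1 (by simp)))] at hy
        refine Or.inr ⟨0, b0, b1, by simp, by simp, ?_, ?_, ?_⟩
        · rw [List.getLast?_eq_getElem?, show b0.length - 1 = k by omega]; exact hx
        · rw [head?_getElem?]; exact hy
        · rw [lenP_cons_succ, lenP_zero]; omega
    · rw [List.getElem?_append, if_neg (by omega)] at hx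
      rw [List.getElem?_append, if_neg (by omega)] at hy
      rw [show k + 1 - b0.length = (k - b0.length) + 1 by omega] at hy
      rcases ih (fun b hb => hne b (List.mem_cons_of_mem _ hb)) hx hy with
        ⟨t, b, i, g1, g2, g3, g4⟩ | ⟨t, b, b', g1, g2, g3, g4, g5⟩
      · refine Or.inl ⟨t + 1, b, i, by simpa using g1, g2, g3, ?_⟩
        rw [lenP_cons_succ]; omega
      · refine Or.inr ⟨t + 1, b, b', by simpa using g1, by simpa using g2, g3, g4, ?_⟩
        rw [lenP_cons_succ]; omega

/-! Jseq lemmas -/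

theorem Jseq_mem {m : ℕ} {L : Set (List ℕ)} (h : IsZigzag m L) {x : List ℕ}
    (hx : x ∈ Jseq m L) : x ∈ L := by
  cases m with
  | zero =>
    cases h
    simp only [Jseq, List.mem_singleton] at hx
    subst hx
    rfl
  | succ n =>
    rw [Jseq] at hx
    obtain ⟨b, hb, hxb⟩ := List.mem_flatten.mp hx
    obtain ⟨t, ht⟩ := List.getElem?_of_mem hb
    rw [List.getElem?_mapIdx] at ht
    obtain ⟨l', hl', hfe⟩ := Option.map_eq_some_iff.mp ht
    subst hfe
    have hxc : x ∈ cSeq L (n + 1) l' := by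
      split at hxb
      · exact List.mem_reverse.mp hxb
      · exact hxb
    exact (cSeq_mem hxc).1

end Aux


theorem good : ∀ n : ℕ, ∀ L : Set (List ℕ), IsZigzag n L → ∀ j : ℕ, 2 ≤ j → j ≤ n →
    ∀ k : ℕ, ∀ π ρ : List ℕ, (Jseq n L)[k]? = some π → (Jseq n L)[k+1]? = some ρ →
    (∃ d, RightJump π ρ j d) →
    ∃ k' π' ρ', k' < k ∧ (Jseq n L)[k']? = some π' ∧ (Jseq n L)[k'+1]? = some ρ' ∧
      ∃ d', LeftJump π' ρ' j d' ∨ RightJump π' ρ' j d' := by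
  intro n
  induction n with
  | zero => intro L _ j hj2 hjn; omega
  | succ n ih =>
    intro L hL j hj2 hjn k π ρ hπ hρ hexd
    obtain ⟨d, hrj⟩ := hexd
    obtain ⟨hsub, hz', hclose⟩ : L ⊆ SymmList (n+1) ∧ IsZigzag n (pdel '' L) ∧
        (∀ l ∈ pdel '' L, cins 1 l ∈ L ∧ cins (n+1) l ∈ L) := by
      cases hL with
      | succ _ _ h1 h2 h3 => exact ⟨h1, h2, h3⟩
    have hJeq : Jseq (n + 1) L = ((Jseq n (pdel '' L)).mapIdx
        (fun t l => if t % 2 = 0 then (cSeq L (n + 1) l).reverse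
          else cSeq L (n + 1) l)).flatten := by
      simp only [Jseq]
    rw [hJeq] at hπ hρ ⊢
    set bs : List (List (List ℕ)) := (Jseq n (pdel '' L)).mapIdx
        (fun t l => if t % 2 = 0 then (cSeq L (n + 1) l).reverse
          else cSeq L (n + 1) l) with hbs
    have memJ' : ∀ {t : ℕ} {l : List ℕ}, (Jseq n (pdel '' L))[t]? = some l →
        l ∈ pdel '' L := fun h => Jseq_mem hz' (mem_of_getElem?' h)
    have specL' : ∀ {l : List ℕ}, l ∈ pdel '' L →
        l.length = n ∧ l.Nodup ∧ (n + 1) ∉ l ∧ (∀ x ∈ l, x < n + 1) := by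
      intro l hl
      obtain ⟨h1, h2, h3⟩ := symm_spec (zig_sub hz' hl)
      exact ⟨h1, h2, fun hm => by have := h3 _ hm; omega,
        fun x hm => by have := h3 x hm; omega⟩
    have specL : ∀ {x : List ℕ}, x ∈ L → x.Nodup := fun hx => (symm_spec (hsub hx)).2.1
    have hbsget : ∀ t : ℕ, bs[t]? = Option.map
        (fun l => if t % 2 = 0 then (cSeq L (n + 1) l).reverse else cSeq L (n + 1) l)
        (Jseq n (pdel '' L))[t]? := by
      intro t; rw [hbs, List.getElem?_mapIdx]
    have hcs_ne : ∀ {l : List ℕ}, l ∈ pdel '' L → cSeq L (n + 1) l ≠ [] := by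
      intro l hl he
      have h1L : cins 1 l ∈ L := (hclose l hl).1
      have h2 : cins 1 l ∈ cSeq L (n+1) l := cins_mem_cSeq (le_refl 1) (by omega) h1L
      rw [he] at h2; simp at h2
    have hbs_ne : ∀ b ∈ bs, b ≠ [] := by
      intro b hb
      obtain ⟨t, ht⟩ := List.getElem?_of_mem hb
      rw [hbsget t] at ht
      obtain ⟨l, hl, hfl⟩ := Option.map_eq_some_iff.mp ht
      have hne := hcs_ne (memJ' hl)
      subst hfl
      by_cases hp : t % 2 = 0
      · simp only [if_pos hp]; simpa using hne
      · simp only [if_neg hp]; exact hne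
    have hpw_gen : ∀ {l : List ℕ}, l ∈ pdel '' L →
        (cSeq L (n+1) l).Pairwise (fun x y => posOf' (n+1) x < posOf' (n+1) y) := by
      intro l hl
      obtain ⟨hlen, _, hnm, _⟩ := specL' hl
      have := cSeq_pairwise (L := L) (m := n+1)
        (by rw [hlen]) (by rw [hlen]; exact hnm)
      rw [hlen] at this
      exact this
    rcases pair_char hbs_ne hπ hρ with
      ⟨t, b, i, hbt, hbi, hbi1, hk⟩ | ⟨t, b, b', hbt0, hbt1, hlastb, hheadb', hk⟩
    · -- within a block
      have hbtc := hbt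
      rw [hbsget t] at hbtc
      obtain ⟨πt, hπt, hbF⟩ := Option.map_eq_some_iff.mp hbtc
      have hπtL := memJ' hπt
      obtain ⟨hlen, hnd, hnm, hall⟩ := specL' hπtL
      have hmemcs : ∀ {x : List ℕ}, x ∈ b → x ∈ cSeq L (n+1) πt := by
        intro x hx
        rw [← hbF] at hx
        by_cases hp : t % 2 = 0
        · rw [if_pos hp] at hx; exact List.mem_reverse.mp hx
        · rw [if_neg hp] at hx; exact hx
      have hmemπ : π ∈ cSeq L (n+1) πt := hmemcs (mem_of_getElem?' hbi)
      have hmemρ : ρ ∈ cSeq L (n+1) πt := hmemcs (mem_of_getElem?' hbi1)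
      obtain ⟨hπL, a, ha1, ha2, hπform⟩ := cSeq_mem hmemπ
      obtain ⟨hρL, a', ha'1, ha'2, hρform⟩ := cSeq_mem hmemρ
      rcases Nat.lt_or_ge j (n+1) with hjlt | hjge
      · exfalso
        rw [hπform, hρform] at hrj
        exact no_jump_cins (l := πt) (by rw [hlen]; exact hnm) hnd
          (by rw [hlen]; omega) hrj
      · have hj : j = n + 1 := by omega
        subst hj
        have hposπ : posOf' (n+1) π = a - 1 := by
          rw [hπform]
          have := posOf'_cins (l := πt) (by rw [hlen]; exact hnm) ha1
            (by rw [hlen]; exact ha2)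
          rw [hlen] at this
          exact this
        have hposρ : posOf' (n+1) ρ = a' - 1 := by
          rw [hρform]
          have := posOf'_cins (l := πt) (by rw [hlen]; exact hnm) ha'1
            (by rw [hlen]; exact ha'2)
          rw [hlen] at this
          exact this
        have hpos := rightJump_pos hrj (specL hπL)
        have hd0 := hrj.1
        have hpw := hpw_gen hπtL
        by_cases hp : t % 2 = 0
        · exfalso
          have hbrev : b = (cSeq L (n+1) πt).reverse := by rw [← hbF, if_pos hp]
          have hpwb : b.Pairwise (fun x y => posOf' (n+1) y < posOf' (n+1) x) := by
            rw [hbrev]; exact List.pairwise_reverse.mpr hpw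
          obtain ⟨hilt, hβ⟩ := List.getElem?_eq_some_iff.mp hbi
          obtain ⟨hilt1, hβ1⟩ := List.getElem?_eq_some_iff.mp hbi1
          have := (List.pairwise_iff_getElem.mp hpwb) i (i+1) hilt hilt1 (by omega)
          rw [hβ, hβ1] at this
          omega
        · obtain ⟨t0, rfl⟩ : ∃ t0, t = t0 + 1 := ⟨t - 1, by omega⟩
          have hp0 : t0 % 2 = 0 := by omega
          have hlt : t0 + 1 < (Jseq n (pdel '' L)).length :=
            (List.getElem?_eq_some_iff.mp hπt).1
          obtain ⟨πt0, hπt0⟩ : ∃ z, (Jseq n (pdel '' L))[t0]? = some z :=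
            ⟨_, List.getElem?_eq_getElem (by omega)⟩
          have hπt0L := memJ' hπt0
          obtain ⟨hlen0, hnd0, hnm0, hall0⟩ := specL' hπt0L
          have hbt0 : bs[t0]? = some ((cSeq L (n+1) πt0).reverse) := by
            rw [hbsget t0, hπt0, Option.map_some, if_pos hp0]
          have hc1 : cins 1 πt0 ∈ cSeq L (n+1) πt0 :=
            cins_mem_cSeq le_rfl (by omega) (hclose _ hπt0L).1
          have hcn : cins (n+1) πt0 ∈ cSeq L (n+1) πt0 :=
            cins_mem_cSeq (by omega) le_rfl (hclose _ hπt0L).2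
          have hne10 : cins 1 πt0 ≠ cins (n+1) πt0 := by
            intro he
            have e1 := posOf'_cins (l := πt0) (by rw [hlen0]; exact hnm0) le_rfl (by omega)
            have e2 := posOf'_cins (l := πt0) (by rw [hlen0]; exact hnm0) (i := n+1)
              (by omega) (by rw [hlen0])
            rw [he] at e1
            rw [e1] at e2
            omega
          have h2le : 2 ≤ ((cSeq L (n+1) πt0).reverse).length := by
            rw [List.length_reverse]; exact two_le_length hc1 hcn hne10
          obtain ⟨e0, he0⟩ : ∃ z, ((cSeq L (n+1) πt0).reverse)[0]? = some z :=
            ⟨_, List.getElem?_eq_getElem (by omega)⟩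
          obtain ⟨e1, he1⟩ : ∃ z, ((cSeq L (n+1) πt0).reverse)[1]? = some z :=
            ⟨_, List.getElem?_eq_getElem (by omega)⟩
          have he0m : e0 ∈ cSeq L (n+1) πt0 := List.mem_reverse.mp (mem_of_getElem?' he0)
          have he1m : e1 ∈ cSeq L (n+1) πt0 := List.mem_reverse.mp (mem_of_getElem?' he1)
          obtain ⟨he0L, a0, ha01, ha02, he0f⟩ := cSeq_mem he0m
          obtain ⟨he1L, a1, ha11, ha12, he1f⟩ := cSeq_mem he1m
          have hpwr : ((cSeq L (n+1) πt0).reverse).Pairwise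
              (fun x y => posOf' (n+1) y < posOf' (n+1) x) :=
            List.pairwise_reverse.mpr (hpw_gen hπt0L)
          have hlt10 : posOf' (n+1) e1 < posOf' (n+1) e0 := by
            obtain ⟨g0, g0e⟩ := List.getElem?_eq_some_iff.mp he0
            obtain ⟨g1, g1e⟩ := List.getElem?_eq_some_iff.mp he1
            have := (List.pairwise_iff_getElem.mp hpwr) 0 1 g0 g1 (by omega)
            rw [g0e, g1e] at this
            exact this
          have hpos0 : posOf' (n+1) e0 = a0 - 1 := by
            rw [he0f]
            have := posOf'_cins (l := πt0) (by rw [hlen0]; exact hnm0) ha01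
              (by rw [hlen0]; exact ha02)
            rw [hlen0] at this; exact this
          have hpos1 : posOf' (n+1) e1 = a1 - 1 := by
            rw [he1f]
            have := posOf'_cins (l := πt0) (by rw [hlen0]; exact hnm0) ha11
              (by rw [hlen0]; exact ha12)
            rw [hlen0] at this; exact this
          have ha10 : a1 < a0 := by omega
          have hjmp : RightJump e1 e0 (n+1) (a0 - a1) := by
            rw [he0f, he1f]
            have := jump_cins (l := πt0) ha11 ha10
              (by rw [hlen0]; exact ha02)
              (by rw [hlen0]; exact hall0)
            rw [hlen0] at this
            exact this
          refine ⟨lenP bs t0, e0, e1, ?_, ?_, ?_, ⟨a0 - a1, Or.inl hjmp⟩⟩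
          · have h1 := lenP_succ hbt0
            omega
          · obtain ⟨g0, g0e⟩ := List.getElem?_eq_some_iff.mp he0
            have h := flatten_getElem? hbt0 g0
            rw [g0e] at h
            rw [show lenP bs t0 = lenP bs t0 + 0 by omega]
            exact h
          · obtain ⟨g1, g1e⟩ := List.getElem?_eq_some_iff.mp he1
            have h := flatten_getElem? hbt0 g1
            rw [g1e] at h
            exact h
    · -- boundary between two blocks
      have hbt0c := hbt0
      have hbt1c := hbt1
      rw [hbsget t] at hbt0c
      rw [hbsget (t+1)] at hbt1c
      obtain ⟨πt, hπt, hbF⟩ := Option.map_eq_some_iff.mp hbt0c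
      obtain ⟨πt1, hπt1, hbF1⟩ := Option.map_eq_some_iff.mp hbt1c
      have hπtL := memJ' hπt
      have hπt1L := memJ' hπt1
      obtain ⟨hlen, hnd, hnm, hall⟩ := specL' hπtL
      obtain ⟨hlen1, hnd1, hnm1, hall1⟩ := specL' hπt1L
      have hforms : (π = (n+1) :: πt ∧ ρ = (n+1) :: πt1) ∨
          (π = πt ++ [n+1] ∧ ρ = πt1 ++ [n+1]) := by
        by_cases hp : t % 2 = 0
        · left
          constructor
          · have hb' : b = (cSeq L (n+1) πt).reverse := by rw [← hbF, if_pos hp]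
            rw [hb', List.getLast?_reverse, cSeq_head (by omega) (hclose _ hπtL).1] at hlastb
            have h := Option.some.inj hlastb
            rw [← h, cins_one, hlen]
          · have hp1 : ¬ (t+1) % 2 = 0 := by omega
            have hb'1 : b' = cSeq L (n+1) πt1 := by rw [← hbF1, if_neg hp1]
            rw [hb'1, cSeq_head (by omega) (hclose _ hπt1L).1] at hheadb'
            have h := Option.some.inj hheadb'
            rw [← h, cins_one, hlen1]
        · right
          constructor
          · have hb' : b = cSeq L (n+1) πt := by rw [← hbF, if_neg hp]
            rw [hb', cSeq_last (by omega) (hclose _ hπtL).2] at hlastb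
            have h := Option.some.inj hlastb
            have h2 := cins_top πt
            rw [hlen] at h2
            rw [← h, h2]
          · have hp1 : (t+1) % 2 = 0 := by omega
            have hb'1 : b' = (cSeq L (n+1) πt1).reverse := by rw [← hbF1, if_pos hp1]
            rw [hb'1, List.head?_reverse, cSeq_last (by omega) (hclose _ hπt1L).2] at hheadb'
            have h := Option.some.inj hheadb'
            have h2 := cins_top πt1
            rw [hlen1] at h2
            rw [← h, h2]
      rcases Nat.lt_or_ge j (n+1) with hjlt | hjge
      · -- project to the inner sequence and use the induction hypothesis
        have hproj : RightJump πt πt1 j d := by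
          rcases hforms with ⟨hπf, hρf⟩ | ⟨hπf, hρf⟩
          · rw [hπf, hρf] at hrj; exact hrj.of_cons hjlt
          · rw [hπf, hρf] at hrj; exact hrj.of_concat hjlt hnm hnm1
        obtain ⟨t', π1, ρ1, ht't, hJt', hJt'1, d', hor⟩ :=
          ih (pdel '' L) hz' j hj2 (by omega) t πt πt1 hπt hπt1 ⟨d, hproj⟩
        have hπ1L := memJ' hJt'
        have hρ1L := memJ' hJt'1
        obtain ⟨hlen', hnd', hnm', hall'⟩ := specL' hπ1L
        obtain ⟨hlen'1, hnd'1, hnm'1, hall'1⟩ := specL' hρ1L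
        obtain ⟨x1, x2, B1, B2, hB1, hB2, hgl, hgh, hx12⟩ :
            ∃ x1 x2 B1 B2, bs[t']? = some B1 ∧ bs[t'+1]? = some B2 ∧
              B1.getLast? = some x1 ∧ B2.head? = some x2 ∧
              ((x1 = (n+1) :: π1 ∧ x2 = (n+1) :: ρ1) ∨
               (x1 = π1 ++ [n+1] ∧ x2 = ρ1 ++ [n+1])) := by
          by_cases hp' : t' % 2 = 0
          · refine ⟨(n+1) :: π1, (n+1) :: ρ1, (cSeq L (n+1) π1).reverse,
              cSeq L (n+1) ρ1, ?_, ?_, ?_, ?_, Or.inl ⟨rfl, rfl⟩⟩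
            · rw [hbsget t', hJt', Option.map_some, if_pos hp']
            · rw [hbsget (t'+1), hJt'1, Option.map_some, if_neg (by omega)]
            · rw [List.getLast?_reverse, cSeq_head (by omega) (hclose _ hπ1L).1,
                cins_one, hlen']
            · rw [cSeq_head (by omega) (hclose _ hρ1L).1, cins_one, hlen'1]
          · refine ⟨π1 ++ [n+1], ρ1 ++ [n+1], cSeq L (n+1) π1,
              (cSeq L (n+1) ρ1).reverse, ?_, ?_, ?_, ?_, Or.inr ⟨rfl, rfl⟩⟩
            · rw [hbsget t', hJt', Option.map_some, if_neg hp']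
            · rw [hbsget (t'+1), hJt'1, Option.map_some, if_pos (by omega)]
            · rw [cSeq_last (by omega) (hclose _ hπ1L).2]
              have h2 := cins_top π1
              rw [hlen'] at h2
              rw [h2]
            · rw [List.head?_reverse, cSeq_last (by omega) (hclose _ hρ1L).2]
              have h2 := cins_top ρ1
              rw [hlen'1] at h2
              rw [h2]
        have hjmp' : LeftJump x1 x2 j d' ∨ RightJump x1 x2 j d' := by
          rcases hx12 with ⟨e1, e2⟩ | ⟨e1, e2⟩ <;> rw [e1, e2]
          · rcases hor with hl' | hr'
            · exact Or.inl (RightJump.consW hl' (n+1))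
            · exact Or.inr (RightJump.consW hr' (n+1))
          · rcases hor with hl' | hr'
            · exact Or.inl (RightJump.concatW hl' (n+1))
            · exact Or.inr (RightJump.concatW hr' (n+1))
        have hB1ne : B1 ≠ [] := hbs_ne _ (mem_of_getElem?' hB1)
        have hB1len : 1 ≤ B1.length := List.length_pos_iff.mpr hB1ne
        have hgl' : B1[B1.length - 1]? = some x1 := by
          rw [← List.getLast?_eq_getElem?]; exact hgl
        have hgh' : B2[0]? = some x2 := by rw [← head?_getElem?]; exact hgh
        have hlenP1 := lenP_succ hB1
        have hflat1 : bs.flatten[lenP bs t' + (B1.length - 1)]? = some x1 := by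
          obtain ⟨g, ge⟩ := List.getElem?_eq_some_iff.mp hgl'
          have h := flatten_getElem? hB1 g
          rw [ge] at h
          exact h
        have hflat2 : bs.flatten[lenP bs t' + (B1.length - 1) + 1]? = some x2 := by
          obtain ⟨g, ge⟩ := List.getElem?_eq_some_iff.mp hgh'
          have h := flatten_getElem? hB2 g
          rw [ge] at h
          rw [show lenP bs t' + (B1.length - 1) + 1 = lenP bs (t'+1) + 0 by omega]
          exact h
        have hmono := lenP_mono bs (show t' + 1 ≤ t by omega)
        have hblen : 1 ≤ b.length :=
          List.length_pos_iff.mpr (hbs_ne _ (mem_of_getElem?' hbt0))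
        have hlenPt := lenP_succ hbt0
        exact ⟨lenP bs t' + (B1.length - 1), x1, x2, by omega, hflat1, hflat2, d', hjmp'⟩
      · -- a jump of n+1 across a block boundary is impossible
        exfalso
        have hj : j = n + 1 := by omega
        have hπnd : π.Nodup := by
          rcases hforms with ⟨hπf, _⟩ | ⟨hπf, _⟩
          · rw [hπf]; exact List.nodup_cons.mpr ⟨hnm, hnd⟩
          · rw [hπf]
            refine List.nodup_append'.mpr ⟨hnd, List.nodup_singleton _, ?_⟩
            intro x hx hx2
            simp only [List.mem_singleton] at hx2
            subst hx2
            exact hnm hx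
        have hpos := rightJump_pos hrj hπnd
        have hd0 := hrj.1
        have heqp : posOf' j π = posOf' j ρ := by
          rcases hforms with ⟨hπf, hρf⟩ | ⟨hπf, hρf⟩
          · rw [hπf, hρf, hj]; simp [posOf']
          · rw [hπf, hρf, hj,
              show πt ++ [n+1] = πt ++ (n+1) :: [] from rfl, posOf'_append_cons hnm,
              show πt1 ++ [n+1] = πt1 ++ (n+1) :: [] from rfl, posOf'_append_cons hnm1,
              hlen, hlen1]
        omega

/-- Let `L_n ⊆ S_n` be a zigzag language. For every
`j ∈ {2,…,n}`, among the pairs of consecutive permutations in `J(L_n)` that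
differ in a jump of the value `j`, the first such pair differs in a *left*
jump of `j`. -/
theorem Jseq_first_jump_left (n : ℕ) (L : Set (List ℕ)) (hL : IsZigzag n L)
    (j : ℕ) (hj2 : 2 ≤ j) (hjn : j ≤ n)
    (k : ℕ) (π ρ : List ℕ)
    (hπ : (Jseq n L)[k]? = some π) (hρ : (Jseq n L)[k + 1]? = some ρ)
    (hjump : ∃ d, LeftJump π ρ j d ∨ RightJump π ρ j d)
    (hfirst : ∀ k' < k, ∀ π' ρ', (Jseq n L)[k']? = some π' →
      (Jseq n L)[k' + 1]? = some ρ' → ¬ ∃ d, LeftJump π' ρ' j d ∨ RightJump π' ρ' j d) :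
    ∃ d, LeftJump π ρ j d := by
  rcases hjump with ⟨d, hd | hd⟩
  · exact ⟨d, hd⟩
  · obtain ⟨k', π', ρ', hk', h1, h2, d', hor⟩ := good n L hL j hj2 hjn k π ρ hπ hρ ⟨d, hd⟩
    exact absurd ⟨d', hor⟩ (hfirst k' hk' π' ρ' h1 h2)
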